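/- Let (g, φ) be a quadratic Lie algebra over a field K of characteristic zero. For every t ≥ 0, the term g^{t+1} of the lower central series and the term Z_t(g) of the upper central series are mutual orthogonal complements, (g^{t+1})^⊥ = Z_t(g); in particular dim g = dim g^{t+1} + dim Z_t(g). -/

import Mathlib

/-- The orthogonal complement `{x ∈ L : φ(x,u) = 0 for all u ∈ U}` of a subspace `U`
relative to a bilinear form `φ`. -/
def perp {K L : Type*} [Field K] [AddCommGroup L] [Module K L]
    (φ : L →ₗ[K] L →ₗ[K] K) (U : Submodule K L) : Submodule K L where
  carrier := {x | ∀ u ∈ U, φ x u = 0}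
  add_mem' := by
    intro a b ha hb u hu
    simp [map_add, ha u hu, hb u hu]
  zero_mem' := by
    intro u hu
    simp
  smul_mem' := by
    intro c a ha u hu
    simp [map_smul, ha u hu]

/-- In a quadratic Lie algebra, for every `t ≥ 0` the term `g^{t+1}` of the lower central
series (`LieModule.lowerCentralSeries K L L t`, since `g^1 = g` is the `0`-th term) and
the term `Z_t(g)` of the upper central series (`LieSubmodule.ucs t ⊥`) are mutual
orthogonal complements, and in particular
`dim g = dim g^{t+1} + dim Z_t(g)`. -/
theorem perp_lowerCentralSeries_eq_ucs
    {K : Type*} [Field K] [CharZero K]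
    {L : Type*} [LieRing L] [LieAlgebra K L] [FiniteDimensional K L]
    (φ : L →ₗ[K] L →ₗ[K] K)
    (hsymm : ∀ x y : L, φ x y = φ y x)
    (hnondeg : ∀ x : L, (∀ y : L, φ x y = 0) → x = 0)
    (hinv : ∀ x y z : L, φ ⁅x, y⁆ z = φ x ⁅y, z⁆) :
    ∀ t : ℕ,
      perp φ (LieSubmodule.toSubmodule (LieModule.lowerCentralSeries K L L t))
          = LieSubmodule.toSubmodule (LieSubmodule.ucs t (⊥ : LieIdeal K L))
      ∧ Module.finrank K L
          = Module.finrank K (LieSubmodule.toSubmodule (LieModule.lowerCentralSeries K L L t))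
            + Module.finrank K
                (LieSubmodule.toSubmodule (LieSubmodule.ucs t (⊥ : LieIdeal K L))) := by
  have hrefl : (φ : LinearMap.BilinForm K L).IsRefl := fun x y h => by
    rw [hsymm]; exact h
  have hnd : LinearMap.BilinForm.Nondegenerate (φ : LinearMap.BilinForm K L) :=
    ⟨fun x h => hnondeg x h, fun y h => hnondeg y fun x => (hsymm y x).trans (h x)⟩
  have hperp : ∀ U : Submodule K L, perp φ U = LinearMap.BilinForm.orthogonal (φ : LinearMap.BilinForm K L) U := by
    intro U
    ext x
    constructor
    · intro hx u hu
      rw [hsymm]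
      exact hx u hu
    · intro hx u hu
      rw [hsymm]
      exact hx u hu
  have hspan : ∀ (S : Set L) (x : L),
      x ∈ perp φ (Submodule.span K S) ↔ ∀ s ∈ S, φ x s = 0 := by
    intro S x
    constructor
    · intro hx s hs
      exact hx s (Submodule.subset_span hs)
    · intro hx u hu
      have : Submodule.span K S ≤ LinearMap.ker (φ x) :=
        Submodule.span_le.mpr fun s hs => LinearMap.mem_ker.mpr (hx s hs)
      exact this hu
  have key : ∀ t : ℕ,
      perp φ (LieSubmodule.toSubmodule (LieModule.lowerCentralSeries K L L t))
        = LieSubmodule.toSubmodule (LieSubmodule.ucs t (⊥ : LieIdeal K L)) := by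
    intro t
    induction t with
    | zero =>
      ext x
      simp only [LieModule.lowerCentralSeries, LieSubmodule.lcs, LieSubmodule.ucs_zero]
      constructor
      · intro hx
        have : x = 0 := hnondeg x fun y => hx y (by simp)
        simp [this]
      · intro hx
        simp only [LieSubmodule.mem_toSubmodule, LieSubmodule.mem_bot] at hx
        intro u _
        simp [hx]
    | succ t ih =>
      ext x
      rw [LieModule.lowerCentralSeries_succ, LieSubmodule.ucs_succ,
        LieSubmodule.lieIdeal_oper_eq_linear_span]
      rw [hspan]
      constructor
      · intro hx
        rw [LieSubmodule.mem_toSubmodule, LieSubmodule.mem_normalizer]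
        intro y
        rw [← LieSubmodule.mem_toSubmodule, ← ih]
        have hxy : ⁅x, y⁆ ∈ perp φ (LieSubmodule.toSubmodule
            (LieModule.lowerCentralSeries K L L t)) := by
          intro u hu
          rw [hinv]
          exact hx _ ⟨⟨y, trivial⟩, ⟨u, hu⟩, rfl⟩
        have : ⁅y, x⁆ = -⁅x, y⁆ := by rw [← lie_skew]
        rw [this]
        exact neg_mem hxy
      · intro hx
        rintro s ⟨⟨y, -⟩, ⟨u, hu⟩, rfl⟩
        rw [← hinv]
        rw [LieSubmodule.mem_toSubmodule, LieSubmodule.mem_normalizer] at hx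
        have hyx := hx y
        rw [← LieSubmodule.mem_toSubmodule, ← ih] at hyx
        have h0 := hyx u hu
        show (φ ⁅x, y⁆) u = 0
        rw [← lie_skew x y, map_neg, LinearMap.neg_apply, h0, neg_zero]
  intro t
  refine ⟨key t, ?_⟩
  have h1 := LinearMap.BilinForm.finrank_add_finrank_orthogonal (B := (φ : LinearMap.BilinForm K L))
    hrefl (LieSubmodule.toSubmodule (LieModule.lowerCentralSeries K L L t))
  rw [LinearMap.BilinForm.orthogonal_top_eq_bot hnd, inf_bot_eq, finrank_bot, add_zero] at h1
  rw [← h1, ← key t, hperp]
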